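/- Let R be a commutative ring, I an ideal, J an ideal and x ∈ R with J + (x) ⊆ I. Assume I² ∩ (J + (x)) = J·I + x·I and (J :_R x) ∩ I = J. Then I² ∩ J = J·I. -/

import Mathlib

open Pointwise

theorem stmt4 {R : Type*} [CommRing R] (I J : Ideal R) (x : R)
    (hx : J + Ideal.span {x} ≤ I)
    (h1 : I ^ 2 ⊓ (J + Ideal.span {x}) = J * I + x • I)
    (h2 : Submodule.colon J (Ideal.span {x}) ⊓ I = J) :
    I ^ 2 ⊓ J = J * I := by
  have hJI : J ≤ I := le_trans le_sup_left hx
  have hxI : x ∈ I := hx (Submodule.mem_sup_right (Ideal.subset_span rfl))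
  apply le_antisymm
  · intro a ha
    obtain ⟨ha2, haJ⟩ := ha
    have hmem : a ∈ J * I + x • I := by
      rw [← h1]
      exact ⟨ha2, Submodule.mem_sup_left haJ⟩
    obtain ⟨b, hb, c, hc, rfl⟩ := Submodule.mem_sup.mp hmem
    obtain ⟨c', hc', rfl⟩ := hc
    have hbJ : b ∈ J := Ideal.mul_le_left hb
    have hcx : x • c' ∈ J := by
      have := Submodule.add_mem J haJ (J.neg_mem hbJ)
      simpa using this
    have hc'J : c' ∈ J := by
      rw [← h2]
      exact ⟨Submodule.mem_colon_span_singleton.mpr (by simpa [smul_eq_mul, mul_comm] using hcx), hc'⟩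
    refine Submodule.add_mem _ hb ?_
    have : c' * x ∈ J * I := Ideal.mul_mem_mul hc'J hxI
    simpa [smul_eq_mul, mul_comm] using this
  · exact le_inf (Ideal.mul_le.mpr fun j hj i hi => by
      rw [sq]; exact Ideal.mul_mem_mul (hJI hj) hi) Ideal.mul_le_left
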